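/- arXiv:0908.2537 — 3 statements merged into one kernel-verified Lean document; each statement's English description precedes it below -/
import Mathlib

section
/- Let A1, A2, A3 be a partition of {1,...,n} into three nonempty parts and μ1, μ2, μ3 positive integers with μ1+μ2+μ3 = k. Define P1 = {x ∈ Δ(k,n) : Σ_{i∈A3} x_i ≤ μ3 and Σ_{i∈A2} x_i ≥ μ2}, P2 = {x ∈ Δ(k,n) : Σ_{i∈A1} x_i ≤ μ1 and Σ_{i∈A3} x_i ≥ μ3}, and P3 = {x ∈ Δ(k,n) : Σ_{i∈A2} x_i ≤ μ2 and Σ_{i∈A1} x_i ≥ μ1}. Then Δ(k,n) = P1 ∪ P2 ∪ P3. -/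
def hypersimplex (k n : ℕ) : Set (Fin n → ℝ) :=
  {x | (∀ i, 0 ≤ x i ∧ x i ≤ 1) ∧ ∑ i, x i = k}

theorem stmt0 (n k : ℕ) (A1 A2 A3 : Finset (Fin n))
    (h1 : A1.Nonempty) (h2 : A2.Nonempty) (h3 : A3.Nonempty)
    (h12 : Disjoint A1 A2) (h13 : Disjoint A1 A3) (h23 : Disjoint A2 A3)
    (hcov : A1 ∪ A2 ∪ A3 = Finset.univ)
    (μ1 μ2 μ3 : ℕ) (hμ1 : 0 < μ1) (hμ2 : 0 < μ2) (hμ3 : 0 < μ3)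
    (hsum : μ1 + μ2 + μ3 = k) :
    hypersimplex k n =
      {x ∈ hypersimplex k n | ∑ i ∈ A3, x i ≤ (μ3 : ℝ) ∧ (μ2 : ℝ) ≤ ∑ i ∈ A2, x i} ∪
      {x ∈ hypersimplex k n | ∑ i ∈ A1, x i ≤ (μ1 : ℝ) ∧ (μ3 : ℝ) ≤ ∑ i ∈ A3, x i} ∪
      {x ∈ hypersimplex k n | ∑ i ∈ A2, x i ≤ (μ2 : ℝ) ∧ (μ1 : ℝ) ≤ ∑ i ∈ A1, x i} := by
  ext x
  constructor
  · intro hx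
    have hdisj : Disjoint (A1 ∪ A2) A3 := Finset.disjoint_union_left.mpr ⟨h13, h23⟩
    have hs : ∑ i ∈ A1, x i + ∑ i ∈ A2, x i + ∑ i ∈ A3, x i = (k : ℝ) := by
      rw [← Finset.sum_union h12, ← Finset.sum_union hdisj, hcov]
      exact hx.2
    have hμ : (μ1 : ℝ) + μ2 + μ3 = (k : ℝ) := by exact_mod_cast congrArg (Nat.cast : ℕ → ℝ) hsum
    rcases le_or_gt (∑ i ∈ A3, x i) (μ3 : ℝ) with h3' | h3'
    · rcases le_or_gt (μ2 : ℝ) (∑ i ∈ A2, x i) with h2' | h2'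
      · exact Or.inl (Or.inl ⟨hx, h3', h2'⟩)
      · exact Or.inr ⟨hx, le_of_lt h2', by linarith⟩
    · rcases le_or_gt (∑ i ∈ A1, x i) (μ1 : ℝ) with h1' | h1'
      · exact Or.inl (Or.inr ⟨hx, h1', le_of_lt h3'⟩)
      · exact Or.inr ⟨hx, by linarith, le_of_lt h1'⟩
  · rintro ((⟨hx, -⟩ | ⟨hx, -⟩) | ⟨hx, -⟩) <;> exact hx
end

section
/- Let J be a finite index set, and for each j ∈ J let A_j be a finite point configuration in ℝ^{k−1} with A_j contained in an affine subspace U_j of dimension μ_j − 1, the U_j pairwise disjoint, and Σ_{j∈J} μ_j ≤ k. Suppose each A_j is in general position within U_j and the family {A_j} is in relative general position. Then a k-element subset B of ∪_j A_j is affinely independent if and only if |B ∩ A_j| ≤ μ_j for all j ∈ J. -/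
/-- A finite set of points is affinely independent. -/
def affIndep {m : ℕ} (s : Finset (Fin m → ℝ)) : Prop :=
  AffineIndependent ℝ (fun x : s => (x : Fin m → ℝ))

lemma affIndep_mono {m : ℕ} {s t : Finset (Fin m → ℝ)} (h : affIndep t) (hst : s ⊆ t) :
    affIndep s := by
  have := AffineIndependent.mono (s := (s : Set (Fin m → ℝ))) h (by exact_mod_cast hst)
  exact this

lemma affIndep_card_le {m : ℕ} {s : Finset (Fin m → ℝ)}
    (h : affIndep s) (V : AffineSubspace ℝ (Fin m → ℝ))
    (hs : (s : Set (Fin m → ℝ)) ⊆ V) :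
    s.card ≤ Module.finrank ℝ V.direction + 1 := by
  rcases Nat.eq_zero_or_pos s.card with h0 | h0
  · omega
  have hcard : Fintype.card s = (s.card - 1) + 1 := by
    simp [Fintype.card_coe]; omega
  have hfr := h.finrank_vectorSpan hcard
  have hrange : Set.range (fun x : s => (x : Fin m → ℝ)) = (s : Set (Fin m → ℝ)) :=
    Subtype.range_coe
  rw [hrange] at hfr
  have hle : vectorSpan ℝ (s : Set (Fin m → ℝ)) ≤ V.direction :=
    vectorSpan_mono ℝ hs
  have := Submodule.finrank_mono hle
  omega

theorem stmt13 (k : ℕ) (hk : 1 ≤ k) {J : Type} [Fintype J]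
    (A : J → Finset (Fin (k - 1) → ℝ)) (μ : J → ℕ) (hμ : ∀ j, 1 ≤ μ j)
    (hsum : ∑ j, μ j ≤ k)
    (U : J → AffineSubspace ℝ (Fin (k - 1) → ℝ))
    (hdim : ∀ j, Module.finrank ℝ (U j).direction = μ j - 1)
    (hne : ∀ j, ((U j : Set (Fin (k - 1) → ℝ))).Nonempty)
    (hAU : ∀ j, (A j : Set (Fin (k - 1) → ℝ)) ⊆ U j)
    (hdisj : ∀ i j, i ≠ j → (U i : Set (Fin (k - 1) → ℝ)) ∩ (U j) = ∅)
    (hgen : ∀ j, ∀ s ⊆ A j, s.card ≤ μ j → affIndep s)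
    (hrel : ∀ s : Finset (Fin (k - 1) → ℝ), (↑s ⊆ ⋃ j, (A j : Set (Fin (k - 1) → ℝ))) →
      s.card ≤ k → ¬ affIndep s → ∃ j, ¬ affIndep (s ∩ A j))
    (B : Finset (Fin (k - 1) → ℝ))
    (hB : ↑B ⊆ ⋃ j, (A j : Set (Fin (k - 1) → ℝ))) (hBk : B.card = k) :
    affIndep B ↔ ∀ j, (B ∩ A j).card ≤ μ j := by
  constructor
  · intro hInd j
    have hsub : ((B ∩ A j : Finset _) : Set (Fin (k - 1) → ℝ)) ⊆ U j := by
      intro x hx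
      simp only [Finset.coe_inter, Set.mem_inter_iff] at hx
      exact hAU j hx.2
    have := affIndep_card_le (affIndep_mono hInd (Finset.inter_subset_left)) (U j) hsub
    have := hdim j
    have := hμ j
    omega
  · intro hcard
    by_contra hInd
    obtain ⟨j, hj⟩ := hrel B hB (le_of_eq hBk) hInd
    exact hj (hgen j _ (Finset.inter_subset_right) (hcard j))
end

section
/- Let Σ be a polyhedral subdivision of a convex polytope Q ⊆ ℝ^d whose interior dual graph (vertices = maximal cells, edges = pairs of maximal cells sharing a common facet that is interior to Q) is disconnected after removing one maximal cell v, and let T be the set of maximal cells of one connected component of this graph minus v. If every codimension-one interior face shared between a cell in T ∪ {v} and a cell outside T ∪ {v} is a facet of the cell v, then the union of the cells in T ∪ {v} is convex. -/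
open Set Module MeasureTheory

lemma extreme_subset_of_mem_interior {E : Type*} [NormedAddCommGroup E] [NormedSpace ℝ E]
    {s t : Set E} (h : IsExtreme ℝ s t) {x : E} (hx : x ∈ t) (hxi : x ∈ interior s) :
    s ⊆ t := by
  intro y hy
  rcases eq_or_ne y x with rfl | hne
  · exact hx
  have hc : ContinuousAt (fun δ : ℝ => x + δ • (x - y)) 0 := by fun_prop
  have h0 : (fun δ : ℝ => x + δ • (x - y)) 0 = x := by simp
  have hev : ∀ᶠ δ in nhds (0:ℝ), x + δ • (x - y) ∈ interior s := by
    have := hc.eventually_mem (isOpen_interior.mem_nhds (h0 ▸ hxi))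
    simpa using this
  have hev' : ∀ᶠ δ in nhdsWithin (0:ℝ) (Set.Ioi 0), x + δ • (x - y) ∈ interior s ∧ δ ∈ Set.Ioi (0:ℝ) :=
    (hev.filter_mono nhdsWithin_le_nhds).and self_mem_nhdsWithin
  obtain ⟨δ, hδs, hδpos⟩ := hev'.exists
  have hδ : (0:ℝ) < δ := hδpos
  have h1δ : (1:ℝ) + δ ≠ 0 := by positivity
  set z := x + δ • (x - y) with hz
  have hzs : z ∈ s := interior_subset hδs
  have hmem : x ∈ openSegment ℝ y z := by
    refine ⟨δ / (1 + δ), 1 / (1 + δ), by positivity, by positivity, ?_, ?_⟩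
    · field_simp; ring
    · rw [hz]; match_scalars <;> field_simp <;> ring
  exact h.2 hy hzs hx hmem

lemma inter_span_ne_top {d : ℕ} {C D : Set (Fin d → ℝ)}
    (hconv : Convex ℝ (C ∩ D))
    (hCD : IsExtreme ℝ C (C ∩ D)) (hDC : IsExtreme ℝ D (D ∩ C)) (hne : C ≠ D) :
    affineSpan ℝ (C ∩ D) ≠ ⊤ := by
  intro htop
  obtain ⟨z, hz⟩ := hconv.interior_nonempty_iff_affineSpan_eq_top.2 htop
  have hzC : z ∈ interior C := interior_mono inter_subset_left hz
  have hzD : z ∈ interior D := interior_mono inter_subset_right hz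
  have h1 : C ⊆ C ∩ D := extreme_subset_of_mem_interior hCD (interior_subset hz) hzC
  have h2 : D ⊆ D ∩ C := by
    refine extreme_subset_of_mem_interior hDC ?_ hzD
    have := interior_subset hz
    exact ⟨this.2, this.1⟩
  exact hne (subset_antisymm (h1.trans inter_subset_right) (h2.trans inter_subset_right))

lemma pick_in_ball {d : ℕ} (G : Set (AffineSubspace ℝ (Fin d → ℝ))) (hG : G.Finite)
    (hne : ∀ A ∈ G, A ≠ ⊤) (c : Fin d → ℝ) {r : ℝ} (hr : 0 < r) :
    ∃ w ∈ Metric.ball c r, ∀ A ∈ G, w ∉ (A : Set (Fin d → ℝ)) := by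
  by_contra h
  push_neg at h
  have hsub : Metric.ball c r ⊆ ⋃ A ∈ G, (A : Set (Fin d → ℝ)) := by
    intro w hw
    obtain ⟨A, hA, hwA⟩ := h w hw
    exact mem_biUnion hA hwA
  have h0 : volume (⋃ A ∈ G, (A : Set (Fin d → ℝ))) = 0 :=
    (measure_biUnion_null_iff hG.countable).2 fun A hA =>
      Measure.addHaar_affineSubspace volume A (hne A hA)
  have : volume (Metric.ball c r) ≤ volume (⋃ A ∈ G, (A : Set (Fin d → ℝ))) := measure_mono hsub
  rw [h0] at this
  exact absurd (le_antisymm this (by simp)) (Metric.measure_ball_pos volume c hr).ne'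

lemma near_interior {E : Type*} [NormedAddCommGroup E] [NormedSpace ℝ E] {s : Set E}
    (hs : Convex ℝ s) {x w : E} (hx : x ∈ s) (hw : w ∈ interior s) {ε : ℝ} (hε : 0 < ε) :
    ∃ x1 ∈ interior s, dist x1 x < ε := by
  set t : ℝ := min (1/2) (ε / (2 * (‖w - x‖ + 1))) with ht
  have hwx : (0:ℝ) < ‖w - x‖ + 1 := by positivity
  have htpos : 0 < t := lt_min (by norm_num) (by positivity)
  have ht1 : t ≤ 1 := le_trans (min_le_left _ _) (by norm_num)
  refine ⟨t • w + (1 - t) • x, hs.combo_interior_closure_mem_interior hw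
    (subset_closure hx) htpos (by linarith) (by ring), ?_⟩
  have heq : t • w + (1 - t) • x - x = t • (w - x) := by module
  rw [dist_eq_norm, heq, norm_smul, Real.norm_eq_abs, abs_of_pos htpos]
  have h2 : t ≤ ε / (2 * (‖w - x‖ + 1)) := min_le_right _ _
  calc t * ‖w - x‖ ≤ (ε / (2 * (‖w - x‖ + 1))) * ‖w - x‖ := by
        apply mul_le_mul_of_nonneg_right h2 (norm_nonneg _)
    _ < ε := by
        rw [div_mul_eq_mul_div, div_lt_iff₀ (by positivity)]
        nlinarith [norm_nonneg (w - x)]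

theorem stmt17 (d : ℕ) (Q : Set (Fin d → ℝ))
    (hQpoly : ∃ VQ : Finset (Fin d → ℝ), Q = convexHull ℝ (VQ : Set (Fin d → ℝ)))
    (Cells : Set (Set (Fin d → ℝ))) (hfin : Cells.Finite)
    (hpoly : ∀ C ∈ Cells, ∃ F : Finset (Fin d → ℝ), C = convexHull ℝ (F : Set (Fin d → ℝ)))
    (hcover : ⋃ C ∈ Cells, C = Q)
    (hfaces : ∀ C ∈ Cells, ∀ D ∈ Cells, IsExtreme ℝ C (C ∩ D))
    (hfull : ∀ C ∈ Cells, Module.finrank ℝ (affineSpan ℝ C).direction = d)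
    (Adj : Set (Fin d → ℝ) → Set (Fin d → ℝ) → Prop)
    (hAdj : ∀ C D, Adj C D ↔ C ∈ Cells ∧ D ∈ Cells ∧ C ≠ D ∧
      Module.finrank ℝ (affineSpan ℝ (C ∩ D)).direction = d - 1 ∧
      ¬ (C ∩ D ⊆ frontier Q))
    (v : Set (Fin d → ℝ)) (hv : v ∈ Cells)
    (T : Set (Set (Fin d → ℝ))) (hT : T ⊆ Cells) (hvT : v ∉ T)
    (hcomp : ∀ C ∈ T, ∀ D ∈ Cells, D ∉ T → D ≠ v → ¬ Adj C D)
    (hfacet : ∀ C ∈ insert v T, ∀ D ∈ Cells, D ∉ insert v T →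
      Module.finrank ℝ (affineSpan ℝ (C ∩ D)).direction = d - 1 →
      ¬ (C ∩ D ⊆ frontier Q) →
      C ∩ D ⊆ v ∧ IsExtreme ℝ v (C ∩ D)) :
    Convex ℝ (⋃ C ∈ insert v T, C) := by
  classical
  rcases Nat.eq_zero_or_pos d with hd0 | hdpos
  · subst hd0
    intro x hx y hy α β hα hβ hαβ
    have hxy : α • x + β • y = x := Subsingleton.elim _ _
    rw [hxy]; exact hx
  -- basic setup
  have hT' : insert v T ⊆ Cells := Set.insert_subset_iff.mpr ⟨hv, hT⟩
  have hfinT' : (insert v T).Finite := hfin.subset hT'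
  have hconvC : ∀ C ∈ Cells, Convex ℝ C := fun C hC => by
    obtain ⟨F, rfl⟩ := hpoly C hC; exact convex_convexHull ℝ _
  have hclosC : ∀ C ∈ Cells, IsClosed C := fun C hC => by
    obtain ⟨F, rfl⟩ := hpoly C hC; exact F.finite_toSet.isClosed_convexHull ℝ
  have hQconv : Convex ℝ Q := by
    obtain ⟨VQ, rfl⟩ := hQpoly; exact convex_convexHull ℝ _
  have hCQ : ∀ C ∈ Cells, C ⊆ Q := fun C hC => by
    rw [← hcover]; exact fun x hx => mem_biUnion hC hx
  set S : Set (Fin d → ℝ) := ⋃ C ∈ insert v T, C with hS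
  have hSclosed : IsClosed S := hfinT'.isClosed_biUnion fun C hC => hclosC C (hT' hC)
  set S' : Set (Fin d → ℝ) := ⋃ C ∈ Cells \ insert v T, C with hS'
  have hS'closed : IsClosed S' :=
    (hfin.subset diff_subset).isClosed_biUnion fun C hC => hclosC C hC.1
  have hfrE : finrank ℝ (Fin d → ℝ) = d := Module.finrank_fin_fun ℝ
  -- full-dimensional cells have interior points
  have hintC : ∀ C ∈ Cells, ∀ x ∈ C, ∃ w, w ∈ interior C := by
    intro C hC x hx
    have hne : ((affineSpan ℝ C : AffineSubspace ℝ (Fin d → ℝ)) : Set (Fin d → ℝ)).Nonempty :=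
      ⟨x, subset_affineSpan ℝ C hx⟩
    have hdir : (affineSpan ℝ C).direction = ⊤ :=
      Submodule.eq_top_of_finrank_eq (by rw [hfull C hC, hfrE])
    have htop : affineSpan ℝ C = ⊤ :=
      (AffineSubspace.direction_eq_top_iff_of_nonempty hne).1 hdir
    exact (hconvC C hC).interior_nonempty_iff_affineSpan_eq_top.2 htop
  -- proper spans of pairwise intersections
  have hproper : ∀ C ∈ Cells, ∀ D ∈ Cells, C ≠ D → affineSpan ℝ (C ∩ D) ≠ ⊤ := by
    intro C hC D hD hne
    exact inter_span_ne_top ((hconvC C hC).inter (hconvC D hD))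
      (hfaces C hC D hD) (hfaces D hD C hC) hne
  -- the bad pairs
  set P : Set (Set (Fin d → ℝ) × Set (Fin d → ℝ)) :=
    {p | p.1 ∈ Cells ∧ p.2 ∈ Cells ∧ p.1 ≠ p.2 ∧
      finrank ℝ (affineSpan ℝ (p.1 ∩ p.2)).direction ≠ d - 1} with hPdef
  have hPfin : P.Finite := (hfin.prod hfin).subset fun p hp => ⟨hp.1, hp.2.1⟩
  have hPlow : ∀ p ∈ P, finrank ℝ (affineSpan ℝ (p.1 ∩ p.2)).direction < d := by
    intro p hp
    by_contra hge
    push_neg at hge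
    have heq : finrank ℝ (affineSpan ℝ (p.1 ∩ p.2)).direction = d :=
      le_antisymm ((Submodule.finrank_le _).trans_eq hfrE) hge
    rcases (p.1 ∩ p.2).eq_empty_or_nonempty with hemp | ⟨x, hx⟩
    · rw [hemp] at heq
      rw [AffineSubspace.span_empty, AffineSubspace.direction_bot, finrank_bot] at heq
      omega
    · have hne : ((affineSpan ℝ (p.1 ∩ p.2) : AffineSubspace ℝ (Fin d → ℝ)) :
          Set (Fin d → ℝ)).Nonempty := ⟨x, subset_affineSpan ℝ _ hx⟩
      have hdir : (affineSpan ℝ (p.1 ∩ p.2)).direction = ⊤ :=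
        Submodule.eq_top_of_finrank_eq (by rw [heq, hfrE])
      exact hproper p.1 hp.1 p.2 hp.2.1 hp.2.2.1
        ((AffineSubspace.direction_eq_top_iff_of_nonempty hne).1 hdir)
  -- main statement via closure
  intro x hx y hy α β hα hβ hαβ
  have hzcl : α • x + β • y ∈ closure S := by
    rw [Metric.mem_closure_iff]
    intro ε hε
    -- choose interior approximations of x and y
    obtain ⟨Cx, hCx, hxCx⟩ := mem_iUnion₂.1 hx
    obtain ⟨Cy, hCy, hyCy⟩ := mem_iUnion₂.1 hy
    obtain ⟨wx, hwx⟩ := hintC Cx (hT' hCx) x hxCx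
    obtain ⟨wy, hwy⟩ := hintC Cy (hT' hCy) y hyCy
    obtain ⟨x1, hx1, hx1d⟩ := near_interior (hconvC Cx (hT' hCx)) hxCx hwx
      (show (0:ℝ) < ε/4 by linarith)
    obtain ⟨y1, hy1, hy1d⟩ := near_interior (hconvC Cy (hT' hCy)) hyCy hwy
      (show (0:ℝ) < ε/4 by linarith)
    obtain ⟨rx, hrx, hrxball⟩ := Metric.isOpen_iff.1 isOpen_interior x1 hx1
    obtain ⟨ry, hry, hryball⟩ := Metric.isOpen_iff.1 isOpen_interior y1 hy1
    have hrx'pos : 0 < min rx (ε/4) := lt_min hrx (by linarith)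
    have hry'pos : 0 < min ry (ε/4) := lt_min hry (by linarith)
    -- first generic point
    set G1 : Set (AffineSubspace ℝ (Fin d → ℝ)) :=
      (fun p => affineSpan ℝ (p.1 ∩ p.2)) '' P with hG1
    have hG1fin : G1.Finite := hPfin.image _
    have hG1ne : ∀ A ∈ G1, A ≠ ⊤ := by
      rintro A ⟨p, hp, rfl⟩
      exact hproper p.1 hp.1 p.2 hp.2.1 hp.2.2.1
    obtain ⟨x', hx'ball, hx'good⟩ := pick_in_ball G1 hG1fin hG1ne x1 hrx'pos
    have hx'int : x' ∈ interior Cx :=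
      hrxball (Metric.ball_subset_ball (min_le_left _ _) hx'ball)
    -- second generic point
    set G2 : Set (AffineSubspace ℝ (Fin d → ℝ)) :=
      (fun p => affineSpan ℝ (insert x'
        ((affineSpan ℝ (p.1 ∩ p.2) : AffineSubspace ℝ (Fin d → ℝ)) : Set (Fin d → ℝ)))) '' P
      with hG2
    have hG2fin : G2.Finite := hPfin.image _
    have hG2ne : ∀ A ∈ G2, A ≠ ⊤ := by
      rintro A ⟨p, hp, rfl⟩
      intro htop
      beta_reduce at htop
      have h1 : finrank ℝ (affineSpan ℝ (insert x'
          ((affineSpan ℝ (p.1 ∩ p.2) : AffineSubspace ℝ (Fin d → ℝ)) :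
            Set (Fin d → ℝ)))).direction ≤
          finrank ℝ (affineSpan ℝ (p.1 ∩ p.2)).direction + 1 := by
        rw [direction_affineSpan]
        exact finrank_vectorSpan_insert_le _ _
      have h2 := hPlow p hp
      have h4 := hp.2.2.2
      rw [htop, AffineSubspace.direction_top, finrank_top, hfrE] at h1
      omega
    obtain ⟨y', hy'ball, hy'good⟩ := pick_in_ball G2 hG2fin hG2ne y1 hry'pos
    have hy'int : y' ∈ interior Cy :=
      hryball (Metric.ball_subset_ball (min_le_left _ _) hy'ball)
    have hx'S : x' ∈ S := mem_biUnion hCx (interior_subset hx'int)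
    have hy'S : y' ∈ S := mem_biUnion hCy (interior_subset hy'int)
    -- genericity of the segment
    have hgen : ∀ C ∈ Cells, ∀ D ∈ Cells, C ≠ D →
        finrank ℝ (affineSpan ℝ (C ∩ D)).direction ≠ d - 1 →
        ∀ u ∈ segment ℝ x' y', u ∉ (affineSpan ℝ (C ∩ D) : Set (Fin d → ℝ)) := by
      intro C hC D hD hne hrk u hu huA
      have hpP : (C, D) ∈ P := ⟨hC, hD, hne, hrk⟩
      have hx'A : x' ∉ (affineSpan ℝ (C ∩ D) : Set (Fin d → ℝ)) :=
        hx'good _ (mem_image_of_mem _ hpP)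
      rw [segment_eq_image'] at hu
      obtain ⟨t, htIcc, rfl⟩ := hu
      have ht0 : t ≠ 0 := by
        rintro rfl
        simp only [zero_smul, add_zero] at huA
        exact hx'A huA
      set Aspan := affineSpan ℝ (insert x'
        ((affineSpan ℝ (C ∩ D) : AffineSubspace ℝ (Fin d → ℝ)) : Set (Fin d → ℝ))) with hAspan
      have hx'sp : x' ∈ Aspan := subset_affineSpan ℝ _ (mem_insert _ _)
      have husp : (x' + t • (y' - x')) ∈ Aspan :=
        subset_affineSpan ℝ _ (mem_insert_of_mem _ huA)
      have hy'sp : y' ∈ Aspan := by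
        have hmem := Aspan.smul_vsub_vadd_mem t⁻¹ husp hx'sp hx'sp
        have heq : t⁻¹ • ((x' + t • (y' - x')) -ᵥ x') +ᵥ x' = y' := by
          rw [vsub_eq_sub, add_sub_cancel_left, smul_smul, inv_mul_cancel₀ ht0, one_smul,
            vadd_eq_add]
          abel
        rwa [heq] at hmem
      exact hy'good Aspan (mem_image_of_mem _ hpP) hy'sp
    -- the segment stays in interior Q
    have hsegint : segment ℝ x' y' ⊆ interior Q := by
      have h1 : interior Cx ⊆ interior Q := interior_mono (hCQ Cx (hT' hCx))
      have h2 : interior Cy ⊆ interior Q := interior_mono (hCQ Cy (hT' hCy))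
      exact (hQconv.interior).segment_subset (h1 hx'int) (h2 hy'int)
    -- key step : the segment stays in S
    have hseg : segment ℝ x' y' ⊆ S := by
      by_contra hcon
      obtain ⟨z0, hz0seg, hz0n⟩ := not_subset.1 hcon
      set g : ℝ → (Fin d → ℝ) := fun t => x' + t • (y' - x') with hg
      have hgc : Continuous g := by fun_prop
      have hgseg : ∀ t ∈ Icc (0:ℝ) 1, g t ∈ segment ℝ x' y' := by
        intro t ht; rw [segment_eq_image']; exact mem_image_of_mem _ ht
      have hz0seg' := hz0seg
      rw [segment_eq_image'] at hz0seg'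
      obtain ⟨ts, htsIcc, hts⟩ := hz0seg'
      set A : Set ℝ := Icc 0 1 ∩ g ⁻¹' S with hA
      have hAclosed : IsClosed A := isClosed_Icc.inter (hSclosed.preimage hgc)
      have h0A : (0:ℝ) ∈ A := ⟨⟨le_refl 0, zero_le_one⟩, by
        simp only [mem_preimage, hg, zero_smul, add_zero]; exact hx'S⟩
      have h1A : (1:ℝ) ∈ A := ⟨⟨zero_le_one, le_refl 1⟩, by
        simp only [mem_preimage, hg, one_smul]
        have : x' + (y' - x') = y' := by abel
        rw [this]; exact hy'S⟩
      have htsnA : ts ∉ A := fun h => hz0n (hts ▸ h.2)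
      set Aa := A ∩ Icc 0 ts with hAa
      set Ab := A ∩ Icc ts 1 with hAb
      have hAacpt : IsCompact Aa := isCompact_Icc.of_isClosed_subset
        (hAclosed.inter isClosed_Icc) (fun t ht => ht.1.1)
      have hAbcpt : IsCompact Ab := isCompact_Icc.of_isClosed_subset
        (hAclosed.inter isClosed_Icc) (fun t ht => ht.1.1)
      have hAane : Aa.Nonempty := ⟨0, h0A, ⟨le_refl 0, htsIcc.1⟩⟩
      have hAbne : Ab.Nonempty := ⟨1, h1A, ⟨htsIcc.2, le_refl 1⟩⟩
      set ta := sSup Aa with hta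
      set tb := sInf Ab with htb
      have htaAa : ta ∈ Aa := hAacpt.sSup_mem hAane
      have htbAb : tb ∈ Ab := hAbcpt.sInf_mem hAbne
      have hta_lt : ta < ts := lt_of_le_of_ne htaAa.2.2
        (fun h => htsnA (h ▸ htaAa.1))
      have htb_gt : ts < tb := lt_of_le_of_ne htbAb.2.1
        (fun h => htsnA (by rw [h]; exact htbAb.1))
      have htab : ta < tb := hta_lt.trans htb_gt
      have h0ta : 0 ≤ ta := htaAa.1.1.1
      have htb1 : tb ≤ 1 := htbAb.1.1.2
      have hmid : ∀ t, ta < t → t < tb → g t ∉ S := by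
        intro t h1 h2 hgt
        rcases le_or_gt t ts with h | h
        · have htA : t ∈ Aa := ⟨⟨⟨h0ta.trans h1.le, h.trans htsIcc.2⟩, hgt⟩,
            ⟨h0ta.trans h1.le, h⟩⟩
          exact absurd (le_csSup hAacpt.bddAbove htA) (not_le.2 h1)
        · have htA : t ∈ Ab := ⟨⟨⟨htsIcc.1.trans h.le, h2.le.trans htb1⟩, hgt⟩,
            ⟨h.le, h2.le.trans htb1⟩⟩
          exact absurd (csInf_le hAbcpt.bddBelow htA) (not_le.2 h2)
      have hmidS' : ∀ t ∈ Ioo ta tb, g t ∈ S' := by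
        intro t ht
        have htIcc : t ∈ Icc (0:ℝ) 1 := ⟨h0ta.trans ht.1.le, ht.2.le.trans htb1⟩
        have hgQ : g t ∈ Q := interior_subset (hsegint (hgseg t htIcc))
        rw [← hcover] at hgQ
        obtain ⟨C, hC, hgC⟩ := mem_iUnion₂.1 hgQ
        have hCn : C ∉ insert v T := fun hmem => hmid t ht.1 ht.2 (mem_biUnion hmem hgC)
        exact mem_biUnion ⟨hC, hCn⟩ hgC
      have hcross : ∀ t ∈ A, t ∈ closure (Ioo ta tb) → g t ∈ v := by
        intro t htA hcl
        have hgS : g t ∈ S := htA.2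
        have hgS' : g t ∈ S' := by
          have h1 : g t ∈ closure (g '' Ioo ta tb) :=
            image_closure_subset_closure_image hgc (mem_image_of_mem g hcl)
          have h2 : g '' Ioo ta tb ⊆ S' := by
            rintro u ⟨t', ht', rfl⟩; exact hmidS' t' ht'
          exact hS'closed.closure_eq ▸ closure_mono h2 h1
        obtain ⟨C, hC, hgC⟩ := mem_iUnion₂.1 hgS
        obtain ⟨D, hD, hgD⟩ := mem_iUnion₂.1 hgS'
        have hne : C ≠ D := fun h => hD.2 (h ▸ hC)
        have hq : g t ∈ interior Q := hsegint (hgseg t htA.1)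
        have hfr : ¬ (C ∩ D ⊆ frontier Q) := by
          intro h
          have h' := h ⟨hgC, hgD⟩
          exact Set.disjoint_left.1 disjoint_interior_frontier hq h'
        have hrank : finrank ℝ (affineSpan ℝ (C ∩ D)).direction = d - 1 := by
          by_contra hne'
          exact hgen C (hT' hC) D hD.1 hne hne' (g t) (hgseg t htA.1)
            (subset_affineSpan ℝ _ ⟨hgC, hgD⟩)
        exact (hfacet C hC D hD.1 hD.2 hrank hfr).1 ⟨hgC, hgD⟩
      have hpv : g ta ∈ v := hcross ta htaAa.1
        (by rw [closure_Ioo htab.ne]; exact ⟨le_refl _, htab.le⟩)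
      have hqv : g tb ∈ v := hcross tb htbAb.1
        (by rw [closure_Ioo htab.ne]; exact ⟨htab.le, le_refl _⟩)
      have hvconv : Convex ℝ v := hconvC v hv
      have htbta : tb - ta ≠ 0 := by
        intro h; exact absurd (by linarith : ta = tb) htab.ne
      have hz0v : z0 ∈ v := by
        have hθ : (ts - ta)/(tb - ta) ∈ Icc (0:ℝ) 1 :=
          ⟨div_nonneg (by linarith) (by linarith),
           (div_le_one (by linarith)).2 (by linarith)⟩
        apply hvconv.segment_subset hpv hqv
        rw [segment_eq_image']
        refine ⟨(ts - ta)/(tb - ta), hθ, ?_⟩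
        rw [← hts]
        simp only [hg]
        match_scalars
        all_goals (field_simp; try ring)
      exact hz0n (mem_biUnion (mem_insert v T) hz0v)
    -- conclude
    refine ⟨α • x' + β • y', hseg ⟨α, β, hα, hβ, hαβ, rfl⟩, ?_⟩
    have hdx : dist x' x < ε/2 := by
      have h1 : dist x' x1 < ε/4 :=
        (Metric.mem_ball.1 hx'ball).trans_le (min_le_right _ _)
      calc dist x' x ≤ dist x' x1 + dist x1 x := dist_triangle _ _ _
        _ < ε/4 + ε/4 := add_lt_add h1 hx1d
        _ = ε/2 := by ring
    have hdy : dist y' y < ε/2 := by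
      have h1 : dist y' y1 < ε/4 :=
        (Metric.mem_ball.1 hy'ball).trans_le (min_le_right _ _)
      calc dist y' y ≤ dist y' y1 + dist y1 y := dist_triangle _ _ _
        _ < ε/4 + ε/4 := add_lt_add h1 hy1d
        _ = ε/2 := by ring
    have hnx : ‖x - x'‖ ≤ ε/2 := by rw [← dist_eq_norm, dist_comm]; exact hdx.le
    have hny : ‖y - y'‖ ≤ ε/2 := by rw [← dist_eq_norm, dist_comm]; exact hdy.le
    calc dist (α • x + β • y) (α • x' + β • y')
        = ‖α • (x - x') + β • (y - y')‖ := by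
          rw [dist_eq_norm]; congr 1; module
      _ ≤ ‖α • (x - x')‖ + ‖β • (y - y')‖ := norm_add_le _ _
      _ = α * ‖x - x'‖ + β * ‖y - y'‖ := by
          rw [norm_smul, norm_smul, Real.norm_eq_abs, Real.norm_eq_abs,
            abs_of_nonneg hα, abs_of_nonneg hβ]
      _ ≤ α * (ε/2) + β * (ε/2) := add_le_add
          (mul_le_mul_of_nonneg_left hnx hα) (mul_le_mul_of_nonneg_left hny hβ)
      _ = ε/2 := by rw [← add_mul, hαβ]; ring
      _ < ε := by linarith

  rwa [hSclosed.closure_eq] at hzcl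
end
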